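/- Let Θ₀ ∈ (0,1) and set δ₀ = (1 − Θ₀)/2. Define v : ℝ → ℝ by v(t) = ∫₀^∞ exp(−(s²/4 + t·s − √Θ₀·s)) · s^{δ₀−1} ds. Then v is twice differentiable on ℝ and satisfies, for every t ∈ ℝ, the differential equation −v''(t) + 2(t − √Θ₀)·v'(t) + v(t) = Θ₀·v(t). -/

import Mathlib

open MeasureTheory

/-- The function `v(t) = ∫₀^∞ e^{−(s²/4 + ts − √Θ₀ s)} s^{δ₀−1} ds`. -/
noncomputable def vFun (Θ₀ δ₀ : ℝ) (t : ℝ) : ℝ :=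
  ∫ s in Set.Ioi (0 : ℝ), Real.exp (-(s ^ 2 / 4 + t * s - Real.sqrt Θ₀ * s)) * s ^ (δ₀ - 1)

open Set Filter Real in
lemma vAux_meas (a t r : ℝ) :
    AEStronglyMeasurable (fun s : ℝ => Real.exp (-(s ^ 2 / 4 + t * s - a * s)) * s ^ r)
      (volume.restrict (Ioi 0)) := by
  apply Measurable.aestronglyMeasurable
  fun_prop

open Set Filter Real in
lemma vAux_int (a t r : ℝ) (hr : -1 < r) :
    IntegrableOn (fun s : ℝ => Real.exp (-(s ^ 2 / 4 + t * s - a * s)) * s ^ r) (Ioi 0) := by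
  have hbound : IntegrableOn
      (fun s : ℝ => Real.exp (2 * (a - t) ^ 2) * (s ^ r * Real.exp (-(1/8 : ℝ) * s ^ 2)))
      (Ioi 0) :=
    (integrableOn_rpow_mul_exp_neg_mul_sq (by norm_num) hr).const_mul _
  refine hbound.mono' (vAux_meas a t r) ?_
  rw [ae_restrict_iff' measurableSet_Ioi]
  filter_upwards with s hs
  have hs' : (0:ℝ) < s := hs
  have h1 : (0:ℝ) ≤ s ^ r := Real.rpow_nonneg hs'.le r
  rw [Real.norm_eq_abs, abs_of_nonneg (mul_nonneg (Real.exp_nonneg _) h1)]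
  have hexp : Real.exp (-(s ^ 2 / 4 + t * s - a * s)) ≤
      Real.exp (2 * (a - t) ^ 2) * Real.exp (-(1/8 : ℝ) * s ^ 2) := by
    rw [← Real.exp_add]
    apply Real.exp_le_exp.2
    nlinarith [sq_nonneg (s - 4 * (a - t))]
  calc Real.exp (-(s ^ 2 / 4 + t * s - a * s)) * s ^ r
      ≤ (Real.exp (2 * (a - t) ^ 2) * Real.exp (-(1/8 : ℝ) * s ^ 2)) * s ^ r := by
        exact mul_le_mul_of_nonneg_right hexp h1
    _ = Real.exp (2 * (a - t) ^ 2) * (s ^ r * Real.exp (-(1/8 : ℝ) * s ^ 2)) := by ring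

open Set Filter Real in
lemma vAux_deriv (a r : ℝ) (hr : -1 < r) (t₀ : ℝ) :
    HasDerivAt (fun t => ∫ s in Ioi (0:ℝ), Real.exp (-(s ^ 2 / 4 + t * s - a * s)) * s ^ r)
      (-∫ s in Ioi (0:ℝ), Real.exp (-(s ^ 2 / 4 + t₀ * s - a * s)) * s ^ (r + 1)) t₀ := by
  have key := hasDerivAt_integral_of_dominated_loc_of_deriv_le (μ := volume.restrict (Ioi 0))
    (F := fun t s => Real.exp (-(s ^ 2 / 4 + t * s - a * s)) * s ^ r)
    (F' := fun t s => -(Real.exp (-(s ^ 2 / 4 + t * s - a * s)) * s ^ (r + 1)))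
    (bound := fun s => Real.exp (-(s ^ 2 / 4 + (t₀ - 1) * s - a * s)) * s ^ (r + 1))
    (x₀ := t₀) (Metric.ball_mem_nhds t₀ one_pos)
    (Eventually.of_forall fun t => vAux_meas a t r)
    (vAux_int a t₀ r hr)
    ((vAux_meas a t₀ (r + 1)).neg)
    ?_ (vAux_int a (t₀ - 1) (r + 1) (by linarith)) ?_
  · have := key.2
    rwa [integral_neg] at this
  · rw [ae_restrict_iff' measurableSet_Ioi]
    filter_upwards with s hs t ht
    have hs' : (0:ℝ) < s := hs
    have h1 : (0:ℝ) ≤ s ^ (r + 1) := Real.rpow_nonneg hs'.le _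
    rw [norm_neg, Real.norm_eq_abs, abs_of_nonneg (mul_nonneg (Real.exp_nonneg _) h1)]
    refine mul_le_mul_of_nonneg_right (Real.exp_le_exp.2 ?_) h1
    have hb : t₀ - 1 ≤ t := by
      have h := Metric.mem_ball.1 ht
      rw [Real.dist_eq] at h
      have := (abs_lt.1 h).1
      linarith
    nlinarith [hb, hs']
  · rw [ae_restrict_iff' measurableSet_Ioi]
    filter_upwards with s hs t _
    have hs' : (0:ℝ) < s := hs
    have h1 : HasDerivAt (fun t : ℝ => -(s ^ 2 / 4 + t * s - a * s)) (-s) t := by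
      have := (((hasDerivAt_id t).mul_const s).const_add (s ^ 2 / 4)).sub_const (a * s)
      simpa [Pi.neg_def] using this.neg
    have h2 := (h1.exp).mul_const (s ^ r)
    refine h2.congr_deriv ?_
    rw [Real.rpow_add_one hs'.ne' r]
    ring

open Set Filter Real in
lemma vAux_ibp (a t δ : ℝ) (hδ : 0 < δ) :
    -(1/2) * (∫ s in Ioi (0:ℝ), Real.exp (-(s ^ 2 / 4 + t * s - a * s)) * s ^ (δ + 1))
      - (t - a) * (∫ s in Ioi (0:ℝ), Real.exp (-(s ^ 2 / 4 + t * s - a * s)) * s ^ δ)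
      + δ * (∫ s in Ioi (0:ℝ), Real.exp (-(s ^ 2 / 4 + t * s - a * s)) * s ^ (δ - 1)) = 0 := by
  set E : ℝ → ℝ := fun s => Real.exp (-(s ^ 2 / 4 + t * s - a * s)) with hE
  set g : ℝ → ℝ := fun s => E s * s ^ δ with hg
  set f' : ℝ → ℝ := fun s =>
    -(1/2) * (E s * s ^ (δ + 1)) - (t - a) * (E s * s ^ δ) + δ * (E s * s ^ (δ - 1)) with hf'
  have hEcont : Continuous E := by
    apply Real.continuous_exp.comp
    fun_prop
  have hint1 := vAux_int a t (δ + 1) (by linarith)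
  have hint2 := vAux_int a t δ (by linarith)
  have hint3 := vAux_int a t (δ - 1) (by linarith)
  have hf'int : IntegrableOn f' (Ioi 0) :=
    ((hint1.const_mul _).sub (hint2.const_mul _)).add (hint3.const_mul _)
  have hderiv : ∀ s ∈ Ioi (0:ℝ), HasDerivAt g (f' s) s := by
    intro s hs
    have hs' : (0:ℝ) < s := hs
    have h1 : HasDerivAt (fun s : ℝ => -(s ^ 2 / 4 + t * s - a * s)) (-(s / 2 + t - a)) s := by
      have := ((((hasDerivAt_pow 2 s).div_const 4).add ((hasDerivAt_id s).const_mul t)).sub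
        ((hasDerivAt_id s).const_mul a)).neg
      exact this.congr_deriv (by norm_num; ring)
    have h2 : HasDerivAt (fun s : ℝ => s ^ δ) (δ * s ^ (δ - 1)) s :=
      Real.hasDerivAt_rpow_const (Or.inl hs'.ne')
    have h3 := (h1.exp).mul h2
    refine h3.congr_deriv (Eq.symm ?_)
    simp only [hf', hE]
    rw [Real.rpow_add_one hs'.ne' δ]
    ring
  have hcont : ContinuousWithinAt g (Ici 0) 0 := by
    apply ContinuousWithinAt.mul (hEcont.continuousAt.continuousWithinAt)
    exact (Real.continuousAt_rpow_const 0 δ (Or.inr hδ.le)).continuousWithinAt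
  have htop : Tendsto g atTop (nhds 0) := by
    have hmain : Tendsto (fun s : ℝ => Real.exp ((a - t + 1) ^ 2) * (s ^ δ * Real.exp (-1 * s)))
        atTop (nhds 0) := by
      have := (tendsto_rpow_mul_exp_neg_mul_atTop_nhds_zero δ 1 one_pos).const_mul
        (Real.exp ((a - t + 1) ^ 2))
      simpa using this
    apply squeeze_zero' (f := g) ?_ ?_ hmain
    · filter_upwards [eventually_gt_atTop (0:ℝ)] with s hs
      exact mul_nonneg (Real.exp_nonneg _) (Real.rpow_nonneg hs.le _)
    · filter_upwards [eventually_gt_atTop (0:ℝ)] with s hs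
      have h1 : (0:ℝ) ≤ s ^ δ := Real.rpow_nonneg hs.le _
      have hexp : E s ≤ Real.exp ((a - t + 1) ^ 2) * Real.exp (-1 * s) := by
        rw [hE, ← Real.exp_add]
        apply Real.exp_le_exp.2
        nlinarith [sq_nonneg (s / 2 - (a - t + 1))]
      calc E s * s ^ δ ≤ (Real.exp ((a - t + 1) ^ 2) * Real.exp (-1 * s)) * s ^ δ :=
            mul_le_mul_of_nonneg_right hexp h1
        _ = Real.exp ((a - t + 1) ^ 2) * (s ^ δ * Real.exp (-1 * s)) := by ring
  have hg0 : g 0 = 0 := by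
    simp [hg, Real.zero_rpow hδ.ne']
  have key := integral_Ioi_of_hasDerivAt_of_tendsto hcont hderiv hf'int htop
  rw [hg0, sub_zero] at key
  have hsplit : ∫ s in Ioi (0:ℝ), f' s =
      -(1/2) * (∫ s in Ioi (0:ℝ), E s * s ^ (δ + 1))
        - (t - a) * (∫ s in Ioi (0:ℝ), E s * s ^ δ)
        + δ * (∫ s in Ioi (0:ℝ), E s * s ^ (δ - 1)) := by
    have hA : Integrable (fun s : ℝ => -(1/2) * (E s * s ^ (δ + 1)) - (t - a) * (E s * s ^ δ))
        (volume.restrict (Ioi 0)) := (hint1.const_mul _).sub (hint2.const_mul _)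
    have hB : Integrable (fun s : ℝ => δ * (E s * s ^ (δ - 1)))
        (volume.restrict (Ioi 0)) := hint3.const_mul _
    have hA1 : Integrable (fun s : ℝ => -(1/2) * (E s * s ^ (δ + 1)))
        (volume.restrict (Ioi 0)) := hint1.const_mul _
    have hA2 : Integrable (fun s : ℝ => (t - a) * (E s * s ^ δ))
        (volume.restrict (Ioi 0)) := hint2.const_mul _
    simp only [hf']
    rw [MeasureTheory.integral_add hA hB, MeasureTheory.integral_sub hA1 hA2,
      integral_const_mul, integral_const_mul, integral_const_mul]
  rw [← hsplit, key]

open Set Filter Real in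
/-- with `Θ₀ ∈ (0,1)` and `δ₀ = (1 − Θ₀)/2`, the function `v` is twice
differentiable on `ℝ` and satisfies `−v'' + 2(t − √Θ₀)v' + v = Θ₀ v` for every `t`. -/
theorem vFun_ode (Θ₀ : ℝ) (hΘ : Θ₀ ∈ Set.Ioo (0 : ℝ) 1) :
    ∀ t : ℝ,
      DifferentiableAt ℝ (vFun Θ₀ ((1 - Θ₀) / 2)) t ∧
      DifferentiableAt ℝ (deriv (vFun Θ₀ ((1 - Θ₀) / 2))) t ∧
      -(deriv (deriv (vFun Θ₀ ((1 - Θ₀) / 2))) t)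
          + 2 * (t - Real.sqrt Θ₀) * deriv (vFun Θ₀ ((1 - Θ₀) / 2)) t
          + vFun Θ₀ ((1 - Θ₀) / 2) t
        = Θ₀ * vFun Θ₀ ((1 - Θ₀) / 2) t := by
  intro t
  set a := Real.sqrt Θ₀ with ha
  set δ := (1 - Θ₀) / 2 with hδdef
  have hδ : 0 < δ := by rw [hδdef]; linarith [hΘ.2]
  -- first derivative
  have hv : ∀ u : ℝ, HasDerivAt (vFun Θ₀ δ)
      (-∫ s in Ioi (0:ℝ), Real.exp (-(s ^ 2 / 4 + u * s - a * s)) * s ^ δ) u := by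
    intro u
    have h := vAux_deriv a (δ - 1) (by linarith) u
    rw [sub_add_cancel] at h
    exact h
  have hderiv1 : deriv (vFun Θ₀ δ) =
      fun u => -∫ s in Ioi (0:ℝ), Real.exp (-(s ^ 2 / 4 + u * s - a * s)) * s ^ δ :=
    funext fun u => (hv u).deriv
  -- second derivative
  have hv2 : ∀ u : ℝ, HasDerivAt (deriv (vFun Θ₀ δ))
      (∫ s in Ioi (0:ℝ), Real.exp (-(s ^ 2 / 4 + u * s - a * s)) * s ^ (δ + 1)) u := by
    intro u
    rw [hderiv1]
    have := (vAux_deriv a δ (by linarith) u).neg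
    simpa [Pi.neg_def] using this
  have hderiv2 : deriv (deriv (vFun Θ₀ δ)) t =
      ∫ s in Ioi (0:ℝ), Real.exp (-(s ^ 2 / 4 + t * s - a * s)) * s ^ (δ + 1) :=
    (hv2 t).deriv
  refine ⟨(hv t).differentiableAt, (hv2 t).differentiableAt, ?_⟩
  have hibp := vAux_ibp a t δ hδ
  have hvt : vFun Θ₀ δ t =
      ∫ s in Ioi (0:ℝ), Real.exp (-(s ^ 2 / 4 + t * s - a * s)) * s ^ (δ - 1) := rfl
  rw [hderiv2, (hv t).deriv, hvt]
  have hδΘ : Θ₀ = 1 - 2 * δ := by rw [hδdef]; ring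
  rw [hδΘ]
  linarith [hibp]
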